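/- Let ρ > 0 and z > 0 be real constants and let u_l ∈ ℝ². Define B̄ = 2ρ(1/z² - 1/(ρ‖u_l‖² + z)²) and C̄ = 1/(ρ‖u_l‖² + z) + 2ρ‖u_l‖²/(ρ‖u_l‖² + z)² - ρ‖u_l‖²/z². Then for every u ∈ ℝ², 1/(ρ‖u‖² + z) ≥ -ρ‖u‖²/z² + B̄⟨u, u_l⟩ + C̄. -/

import Mathlib

theorem surrogate_g1_global_lower_bound (ρ z : ℝ) (hρ : 0 < ρ) (hz : 0 < z)
    (ul : EuclideanSpace ℝ (Fin 2)) (u : EuclideanSpace ℝ (Fin 2)) :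
    1 / (ρ * ‖u‖ ^ 2 + z) ≥
      -ρ * ‖u‖ ^ 2 / z ^ 2
        + (2 * ρ * (1 / z ^ 2 - 1 / (ρ * ‖ul‖ ^ 2 + z) ^ 2)) * (inner ℝ u ul : ℝ)
        + (1 / (ρ * ‖ul‖ ^ 2 + z) + 2 * ρ * ‖ul‖ ^ 2 / (ρ * ‖ul‖ ^ 2 + z) ^ 2
            - ρ * ‖ul‖ ^ 2 / z ^ 2) := by
  set s := ‖u‖ ^ 2 with hs
  set r := ‖ul‖ ^ 2 with hr
  set t : ℝ := inner ℝ u ul with ht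
  have hs0 : 0 ≤ s := sq_nonneg _
  have hr0 : 0 ≤ r := sq_nonneg _
  have hA : 0 < ρ * s + z := by positivity
  have hB : 0 < ρ * r + z := by positivity
  have ht2 : 2 * t ≤ s + r := by
    have h1 : t ≤ ‖u‖ * ‖ul‖ := real_inner_le_norm u ul
    nlinarith [sq_nonneg (‖u‖ - ‖ul‖)]
  have h1 : 0 ≤ 1 / (ρ * s + z) - 1 / (ρ * r + z) + ρ * (s - r) / (ρ * r + z) ^ 2 := by
    have heq : 1 / (ρ * s + z) - 1 / (ρ * r + z) + ρ * (s - r) / (ρ * r + z) ^ 2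
        = (ρ * s - ρ * r) ^ 2 / ((ρ * s + z) * (ρ * r + z) ^ 2) := by
      field_simp
      ring
    rw [heq]
    positivity
  have hcoef : 0 ≤ ρ / z ^ 2 - ρ / (ρ * r + z) ^ 2 := by
    have hz2 : (0:ℝ) < z ^ 2 := by positivity
    have hB2 : (0:ℝ) < (ρ * r + z) ^ 2 := by positivity
    rw [sub_nonneg, div_le_div_iff₀ hB2 hz2]
    nlinarith [mul_nonneg (mul_nonneg (mul_nonneg hρ.le hρ.le) hρ.le) (mul_nonneg hr0 hr0),
      mul_nonneg (mul_nonneg (mul_nonneg hρ.le hρ.le) hr0) hz.le]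
  have h2 : 0 ≤ (ρ / z ^ 2 - ρ / (ρ * r + z) ^ 2) * (s + r - 2 * t) :=
    mul_nonneg hcoef (by linarith)
  have hident : 1 / (ρ * s + z) - (-ρ * s / z ^ 2
        + (2 * ρ * (1 / z ^ 2 - 1 / (ρ * r + z) ^ 2)) * t
        + (1 / (ρ * r + z) + 2 * ρ * r / (ρ * r + z) ^ 2 - ρ * r / z ^ 2))
      = (1 / (ρ * s + z) - 1 / (ρ * r + z) + ρ * (s - r) / (ρ * r + z) ^ 2)
        + (ρ / z ^ 2 - ρ / (ρ * r + z) ^ 2) * (s + r - 2 * t) := by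
    field_simp
    ring
  linarith [hident ▸ add_nonneg h1 h2]
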